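/- Let n ≥ 2, θ > 0, and let π₁,...,π_N be i.i.d. samples from the Mallows' φ model P_{θ,id}. Then P_{θ,id}( Σ_{i=1}^N inv(π_i ∘ (1,2)) ≤ Σ_{i=1}^N inv(π_i) ) = P( Bin(N, 1/(1+e^{θ})) ≥ N/2 ), where Bin(N,p) denotes a binomial random variable with N trials and success probability p. -/

import Mathlib

open scoped BigOperators Classical

/-- Number of inversions of a permutation of `Fin n`. -/
def numInv {n : ℕ} (π : Equiv.Perm (Fin n)) : ℕ :=
  (Finset.univ.filter fun p : Fin n × Fin n => p.1 < p.2 ∧ π p.2 < π p.1).card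

/-- Mallows' φ model probability mass at `π`, with dispersion `θ` and central ranking `π₀`. -/
noncomputable def mallowsP (n : ℕ) (θ : ℝ) (π₀ π : Equiv.Perm (Fin n)) : ℝ :=
  Real.exp (-θ * numInv (π * π₀⁻¹)) / ∑ σ : Equiv.Perm (Fin n), Real.exp (-θ * numInv σ)

/-- Probability of the event `A` under `N` i.i.d. samples from the Mallows' φ model. -/
noncomputable def probOf (n N : ℕ) (θ : ℝ) (π₀ : Equiv.Perm (Fin n))
    (A : (Fin N → Equiv.Perm (Fin n)) → Prop) : ℝ :=
  ∑ x ∈ Finset.univ.filter A, ∏ i, mallowsP n θ π₀ (x i)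


def fa {n : ℕ} (hn : 2 ≤ n) : Fin n := ⟨0, by omega⟩
def fb {n : ℕ} (hn : 2 ≤ n) : Fin n := ⟨1, by omega⟩

section MallowsAux
variable {n : ℕ} (hn : 2 ≤ n) (θ : ℝ)

lemma swap01_lt (i j : Fin n) (hij : i < j) (h : ¬(i = fa hn ∧ j = fb hn)) :
    Equiv.swap (fa hn) (fb hn) i < Equiv.swap (fa hn) (fb hn) j := by
  have hfa : ((fa hn) : ℕ) = 0 := rfl
  have hfb : ((fb hn) : ℕ) = 1 := rfl
  simp only [Equiv.swap_apply_def]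
  split_ifs with h1 h2 h3 h4 h5 h6 h7 h8 <;>
    simp only [Fin.ext_iff, Fin.lt_def, not_and] at * <;> omega

lemma key_numInv (π : Equiv.Perm (Fin n)) :
    numInv (π * Equiv.swap (fa hn) (fb hn)) + (if π (fb hn) < π (fa hn) then 1 else 0)
      = numInv π + (if π (fa hn) < π (fb hn) then 1 else 0) := by
  set a := fa hn
  set b := fb hn
  have hab : a < b := by simp [a, b, fa, fb, Fin.lt_def]
  have hne : π a ≠ π b := fun h => absurd (π.injective h) (ne_of_lt hab)
  set τ := Equiv.swap a b with hτ
  have hτa : τ a = b := Equiv.swap_apply_left a b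
  have hτb : τ b = a := Equiv.swap_apply_right a b
  have hττ : ∀ x, τ (τ x) = x := fun x => Equiv.swap_apply_self a b x
  -- inversion sets
  set S1 := (Finset.univ.filter fun p : Fin n × Fin n => p.1 < p.2 ∧ (π * τ) p.2 < (π * τ) p.1)
    with hS1
  set S2 := (Finset.univ.filter fun p : Fin n × Fin n => p.1 < p.2 ∧ π p.2 < π p.1) with hS2
  have hcard : (S1.erase (a, b)).card = (S2.erase (a, b)).card := by
    apply Finset.card_bij' (fun p _ => (τ p.1, τ p.2)) (fun p _ => (τ p.1, τ p.2))
    · rintro ⟨i, j⟩ hp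
      simp only [Finset.mem_erase, hS1, Finset.mem_filter, Finset.mem_univ, true_and] at hp
      obtain ⟨hne', hij, hinv⟩ := hp
      simp only [Equiv.Perm.mul_apply] at hinv
      have hlt : τ i < τ j := by
        apply swap01_lt hn i j hij
        rintro ⟨rfl, rfl⟩; exact hne' rfl
      simp only [Finset.mem_erase, hS2, Finset.mem_filter, Finset.mem_univ, true_and]
      refine ⟨?_, hlt, hinv⟩
      intro hc
      have h1 : τ i = a := congrArg Prod.fst hc
      have h2 : τ j = b := congrArg Prod.snd hc
      have hib : i = b := by rw [← hτa, ← h1, hττ]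
      have hja : j = a := by rw [← hτb, ← h2, hττ]
      rw [hib, hja] at hij
      exact absurd hij (not_lt.2 hab.le)
    · rintro ⟨i, j⟩ hp
      simp only [Finset.mem_erase, hS2, Finset.mem_filter, Finset.mem_univ, true_and] at hp
      obtain ⟨hne', hij, hinv⟩ := hp
      have hlt : τ i < τ j := by
        apply swap01_lt hn i j hij
        rintro ⟨rfl, rfl⟩; exact hne' rfl
      simp only [Finset.mem_erase, hS1, Finset.mem_filter, Finset.mem_univ, true_and]
      simp only [Equiv.Perm.mul_apply, hττ]
      refine ⟨?_, hlt, hinv⟩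
      intro hc
      have h1 : τ i = a := congrArg Prod.fst hc
      have h2 : τ j = b := congrArg Prod.snd hc
      have hib : i = b := by rw [← hτa, ← h1, hττ]
      have hja : j = a := by rw [← hτb, ← h2, hττ]
      rw [hib, hja] at hij
      exact absurd hij (not_lt.2 hab.le)
    · rintro ⟨i, j⟩ _; simp [hττ]
    · rintro ⟨i, j⟩ _; simp [hττ]
  have hmem1 : (a, b) ∈ S1 ↔ π a < π b := by
    rw [hS1, Finset.mem_filter]; simp [hab, Equiv.Perm.mul_apply, hτa, hτb]
  have hmem2 : (a, b) ∈ S2 ↔ π b < π a := by simp [hS2, hab]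
  have e1 : S1.card = (S1.erase (a,b)).card + (if π a < π b then 1 else 0) := by
    by_cases h : π a < π b
    · rw [if_pos h, ← Finset.card_erase_add_one (hmem1.2 h)]
    · rw [if_neg h, Finset.erase_eq_of_notMem (fun hc => h (hmem1.1 hc))]; omega
  have e2 : S2.card = (S2.erase (a,b)).card + (if π b < π a then 1 else 0) := by
    by_cases h : π b < π a
    · rw [if_pos h, ← Finset.card_erase_add_one (hmem2.2 h)]
    · rw [if_neg h, Finset.erase_eq_of_notMem (fun hc => h (hmem2.1 hc))]; omega
  have hn1 : numInv (π * τ) = S1.card := rfl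
  have hn2 : numInv π = S2.card := rfl
  have htri : (if π a < π b then (1:ℕ) else 0) + (if π b < π a then 1 else 0) = 1 := by
    rcases lt_or_gt_of_ne hne with h | h
    · simp [h, asymm h]
    · simp [h, asymm h]
  omega


end MallowsAux

noncomputable def Zc (n : ℕ) (θ : ℝ) : ℝ := ∑ σ : Equiv.Perm (Fin n), Real.exp (-θ * numInv σ)

section MallowsAux2
variable {n : ℕ} (hn : 2 ≤ n) (θ : ℝ)

lemma Zc_pos : 0 < Zc n θ :=
  Finset.sum_pos (fun _ _ => Real.exp_pos _) ⟨1, Finset.mem_univ _⟩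

lemma ne_ab (π : Equiv.Perm (Fin n)) : π (fa hn) ≠ π (fb hn) := by
  intro h
  have := π.injective h
  simp [fa, fb, Fin.ext_iff] at this

lemma not_desc_iff (π : Equiv.Perm (Fin n)) :
    ¬ (π (fb hn) < π (fa hn)) ↔ π (fa hn) < π (fb hn) := by
  rcases lt_or_gt_of_ne (ne_ab hn π) with h | h
  · simp [h, asymm h]
  · simp [h, asymm h]

lemma numInv_mul_swap_of_asc (π : Equiv.Perm (Fin n)) (h : π (fa hn) < π (fb hn)) :
    numInv (π * Equiv.swap (fa hn) (fb hn)) = numInv π + 1 := by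
  have := key_numInv hn π
  rw [if_pos h, if_neg (asymm h)] at this
  omega

lemma sum_desc :
    ∑ π ∈ Finset.univ.filter (fun π : Equiv.Perm (Fin n) => π (fb hn) < π (fa hn)),
        Real.exp (-θ * numInv π)
      = Real.exp (-θ) *
        ∑ π ∈ Finset.univ.filter (fun π : Equiv.Perm (Fin n) => ¬ π (fb hn) < π (fa hn)),
          Real.exp (-θ * numInv π) := by
  rw [Finset.mul_sum]
  set τ := Equiv.swap (fa hn) (fb hn) with hτ
  have hττ : ∀ σ : Equiv.Perm (Fin n), σ * τ * τ = σ := by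
    intro σ
    rw [mul_assoc, hτ, Equiv.swap_mul_self, mul_one]
  symm
  apply Finset.sum_bij' (fun π _ => π * τ) (fun π _ => π * τ)
  · intro π hπ
    rw [Finset.mem_filter, not_desc_iff hn] at hπ
    rw [Finset.mem_filter]
    refine ⟨Finset.mem_univ _, ?_⟩
    have h1 : (π * τ) (fa hn) = π (fb hn) := by
      simp [hτ, Equiv.Perm.mul_apply]
    have h2 : (π * τ) (fb hn) = π (fa hn) := by
      simp [hτ, Equiv.Perm.mul_apply]
    rw [h1, h2]; exact hπ.2
  · intro π hπ
    rw [Finset.mem_filter] at hπ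
    rw [Finset.mem_filter, not_desc_iff hn]
    refine ⟨Finset.mem_univ _, ?_⟩
    have h1 : (π * τ) (fa hn) = π (fb hn) := by
      simp [hτ, Equiv.Perm.mul_apply]
    have h2 : (π * τ) (fb hn) = π (fa hn) := by
      simp [hτ, Equiv.Perm.mul_apply]
    rw [h1, h2]; exact hπ.2
  · intro π _; exact hττ π
  · intro π _; exact hττ π
  · intro π hπ
    rw [Finset.mem_filter, not_desc_iff hn] at hπ
    rw [numInv_mul_swap_of_asc hn π hπ.2]
    rw [← Real.exp_add]
    congr 1
    push_cast
    ring

lemma sum_desc_eq :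
    ∑ π ∈ Finset.univ.filter (fun π : Equiv.Perm (Fin n) => π (fb hn) < π (fa hn)),
        Real.exp (-θ * numInv π) = Zc n θ * (1 / (1 + Real.exp θ)) := by
  have hsplit := Finset.sum_filter_add_sum_filter_not Finset.univ
    (fun π : Equiv.Perm (Fin n) => π (fb hn) < π (fa hn))
    (fun π => Real.exp (-θ * numInv π))
  set D := ∑ π ∈ Finset.univ.filter (fun π : Equiv.Perm (Fin n) => π (fb hn) < π (fa hn)),
      Real.exp (-θ * numInv π) with hD
  set A := ∑ π ∈ Finset.univ.filter (fun π : Equiv.Perm (Fin n) => ¬ π (fb hn) < π (fa hn)),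
      Real.exp (-θ * numInv π) with hA
  have hZ : D + A = Zc n θ := hsplit
  have hDA : D = Real.exp (-θ) * A := sum_desc hn θ
  have he : Real.exp (-θ) = (Real.exp θ)⁻¹ := Real.exp_neg θ
  have hepos : (0:ℝ) < Real.exp θ := Real.exp_pos θ
  rw [hDA, he] at hZ ⊢
  field_simp at hZ ⊢
  linarith [hZ]

lemma sum_asc_eq :
    ∑ π ∈ Finset.univ.filter (fun π : Equiv.Perm (Fin n) => ¬ π (fb hn) < π (fa hn)),
        Real.exp (-θ * numInv π) = Zc n θ * (1 - 1 / (1 + Real.exp θ)) := by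
  have hsplit := Finset.sum_filter_add_sum_filter_not Finset.univ
    (fun π : Equiv.Perm (Fin n) => π (fb hn) < π (fa hn))
    (fun π => Real.exp (-θ * numInv π))
  have h2 := sum_desc_eq hn θ
  have hZ : Zc n θ = ∑ σ : Equiv.Perm (Fin n), Real.exp (-θ * numInv σ) := rfl
  rw [h2, ← hZ] at hsplit
  linarith [hsplit]


end MallowsAux2

/-- the probability that the transposition `(1,2)` is at least as likely as
the identity under the total-inversions criterion equals the binomial tail probability
`P(Bin(N, 1/(1+e^θ)) ≥ N/2)`. -/
theorem mallows_transposition_12_binomial_tail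
    (n : ℕ) (hn : 2 ≤ n) (θ : ℝ) (hθ : 0 < θ) (N : ℕ) (hN : 1 ≤ N) :
    probOf n N θ 1 (fun x =>
        ∑ i, numInv (x i * Equiv.swap (⟨0, by omega⟩ : Fin n) (⟨1, by omega⟩ : Fin n)) ≤
          ∑ i, numInv (x i)) =
      ∑ m ∈ Finset.range (N + 1),
        if (N : ℝ) / 2 ≤ m then
          (N.choose m : ℝ) * (1 / (1 + Real.exp θ)) ^ m *
            (1 - 1 / (1 + Real.exp θ)) ^ (N - m)
        else 0 := by
  classical
  have ha : (⟨0, by omega⟩ : Fin n) = fa hn := rfl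
  have hb : (⟨1, by omega⟩ : Fin n) = fb hn := rfl
  set p : ℝ := 1 / (1 + Real.exp θ) with hp
  have hZpos : 0 < Zc n θ := Zc_pos θ
  -- event equivalence
  have hev : ∀ x : Fin N → Equiv.Perm (Fin n),
      ((∑ i, numInv (x i * Equiv.swap (⟨0, by omega⟩ : Fin n) (⟨1, by omega⟩ : Fin n))
          ≤ ∑ i, numInv (x i)) ↔
        N ≤ 2 * (Finset.univ.filter fun i => (x i) (fb hn) < (x i) (fa hn)).card) := by
    intro x
    rw [ha, hb]
    have hkey : ∀ i : Fin N,
        numInv (x i * Equiv.swap (fa hn) (fb hn))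
            + (if (x i) (fb hn) < (x i) (fa hn) then 1 else 0)
          = numInv (x i) + (if ¬ (x i) (fb hn) < (x i) (fa hn) then 1 else 0) := by
      intro i
      rw [if_congr (not_desc_iff hn (x i)) rfl rfl]
      exact key_numInv hn (x i)
    have h2 : (∑ i, numInv (x i * Equiv.swap (fa hn) (fb hn)))
          + (Finset.univ.filter fun i => (x i) (fb hn) < (x i) (fa hn)).card
        = (∑ i, numInv (x i))
          + (Finset.univ.filter fun i => ¬ (x i) (fb hn) < (x i) (fa hn)).card := by
      rw [Finset.card_filter, Finset.card_filter, ← Finset.sum_add_distrib,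
        ← Finset.sum_add_distrib]
      exact Finset.sum_congr rfl (fun i _ => hkey i)
    have hcards : (Finset.univ.filter fun i => (x i) (fb hn) < (x i) (fa hn)).card
        + (Finset.univ.filter fun i => ¬ (x i) (fb hn) < (x i) (fa hn)).card = N := by
      rw [Finset.card_filter_add_card_filter_not]
      simp [Finset.card_univ]
    omega
  -- rewrite probOf
  unfold probOf
  have hmal : ∀ π : Equiv.Perm (Fin n), mallowsP n θ 1 π = Real.exp (-θ * numInv π) / Zc n θ := by
    intro π; simp [mallowsP, Zc]
  have hfilter : (Finset.univ.filter fun x : Fin N → Equiv.Perm (Fin n) =>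
        ∑ i, numInv (x i * Equiv.swap (⟨0, by omega⟩ : Fin n) (⟨1, by omega⟩ : Fin n))
          ≤ ∑ i, numInv (x i))
      = Finset.univ.filter (fun x : Fin N → Equiv.Perm (Fin n) =>
          N ≤ 2 * (Finset.univ.filter fun i => (x i) (fb hn) < (x i) (fa hn)).card) :=
    Finset.filter_congr (fun x _ => hev x)
  trans (∑ x ∈ Finset.univ.filter (fun x : Fin N → Equiv.Perm (Fin n) =>
      N ≤ 2 * (Finset.univ.filter fun i => (x i) (fb hn) < (x i) (fa hn)).card),
      ∏ i, mallowsP n θ 1 (x i))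
  · apply Finset.sum_congr _ (fun x _ => rfl)
    ext x
    simp only [Finset.mem_filter, Finset.mem_univ, true_and]
    exact hev x
  rw [Finset.sum_filter]
  rw [← Finset.sum_fiberwise_of_maps_to (t := (Finset.univ : Finset (Fin N)).powerset)
    (g := fun x : Fin N → Equiv.Perm (Fin n) =>
      Finset.univ.filter fun i => (x i) (fb hn) < (x i) (fa hn))
    (fun x _ => Finset.mem_powerset.2 (Finset.filter_subset _ _))]
  -- fibers are product sets
  have hfiber : ∀ T : Finset (Fin N),
      (Finset.univ.filter fun x : Fin N → Equiv.Perm (Fin n) =>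
          (Finset.univ.filter fun i => (x i) (fb hn) < (x i) (fa hn)) = T)
        = Fintype.piFinset (fun i => if i ∈ T
            then Finset.univ.filter (fun π : Equiv.Perm (Fin n) => π (fb hn) < π (fa hn))
            else Finset.univ.filter (fun π : Equiv.Perm (Fin n) => ¬ π (fb hn) < π (fa hn))) := by
    intro T
    ext x
    simp only [Finset.mem_filter, Finset.mem_univ, true_and, Fintype.mem_piFinset]
    constructor
    · intro hT i
      by_cases hi : i ∈ T
      · rw [if_pos hi]
        simp only [Finset.mem_filter, Finset.mem_univ, true_and]
        have : i ∈ Finset.univ.filter fun i => (x i) (fb hn) < (x i) (fa hn) := hT ▸ hi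
        simpa using this
      · rw [if_neg hi]
        simp only [Finset.mem_filter, Finset.mem_univ, true_and]
        intro hq'
        exact hi (hT ▸ (by simpa using hq' :
          i ∈ Finset.univ.filter fun i => (x i) (fb hn) < (x i) (fa hn)))
    · intro h
      ext i
      simp only [Finset.mem_filter, Finset.mem_univ, true_and]
      constructor
      · intro hq'
        by_contra hi
        have := h i
        rw [if_neg hi] at this
        simp only [Finset.mem_filter, Finset.mem_univ, true_and] at this
        exact this hq'
      · intro hi
        have := h i
        rw [if_pos hi] at this
        simpa using this
  -- compute the inner sums
  have hinner : ∀ T : Finset (Fin N), T ∈ (Finset.univ : Finset (Fin N)).powerset →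
      (∑ x ∈ Finset.univ.filter (fun x : Fin N → Equiv.Perm (Fin n) =>
          (Finset.univ.filter fun i => (x i) (fb hn) < (x i) (fa hn)) = T),
        if N ≤ 2 * (Finset.univ.filter fun i => (x i) (fb hn) < (x i) (fa hn)).card
          then ∏ i, mallowsP n θ 1 (x i) else 0)
      = if N ≤ 2 * T.card then p ^ T.card * (1 - p) ^ (N - T.card) else 0 := by
    intro T _
    have step1 : ∀ x ∈ Finset.univ.filter (fun x : Fin N → Equiv.Perm (Fin n) =>
          (Finset.univ.filter fun i => (x i) (fb hn) < (x i) (fa hn)) = T),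
        (if N ≤ 2 * (Finset.univ.filter fun i => (x i) (fb hn) < (x i) (fa hn)).card
          then ∏ i, mallowsP n θ 1 (x i) else 0)
        = if N ≤ 2 * T.card then ∏ i, mallowsP n θ 1 (x i) else 0 := by
      intro x hx
      rw [(Finset.mem_filter.1 hx).2]
    rw [Finset.sum_congr rfl step1]
    by_cases hc : N ≤ 2 * T.card
    · simp only [if_pos hc]
      rw [hfiber T]
      have := (Finset.prod_univ_sum (fun i : Fin N => if i ∈ T
            then Finset.univ.filter (fun π : Equiv.Perm (Fin n) => π (fb hn) < π (fa hn))
            else Finset.univ.filter (fun π : Equiv.Perm (Fin n) => ¬ π (fb hn) < π (fa hn)))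
          (fun _ π => mallowsP n θ 1 π)).symm
      rw [this]
      have hco : ∀ i : Fin N, (∑ π ∈ (if i ∈ T
            then Finset.univ.filter (fun π : Equiv.Perm (Fin n) => π (fb hn) < π (fa hn))
            else Finset.univ.filter (fun π : Equiv.Perm (Fin n) => ¬ π (fb hn) < π (fa hn))),
          mallowsP n θ 1 π) = if i ∈ T then p else 1 - p := by
        intro i
        by_cases hi : i ∈ T
        · rw [if_pos hi, if_pos hi]
          simp only [hmal]
          rw [← Finset.sum_div, sum_desc_eq hn θ,
            mul_div_cancel_left₀ _ (ne_of_gt hZpos)]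
        · rw [if_neg hi, if_neg hi]
          simp only [hmal]
          rw [← Finset.sum_div, sum_asc_eq hn θ,
            mul_div_cancel_left₀ _ (ne_of_gt hZpos)]
      rw [Finset.prod_congr rfl (fun i _ => hco i)]
      rw [Finset.prod_ite (fun _ => p) (fun _ => 1 - p), Finset.prod_const, Finset.prod_const]
      congr 1
      · congr 1
        congr 1
        simp
      · congr 1
        have : (Finset.univ.filter fun i : Fin N => ¬ i ∈ T) = Tᶜ := by
          ext i; simp
        rw [this, Finset.card_compl]
        simp
    · simp only [if_neg hc, Finset.sum_const_zero]
  rw [Finset.sum_congr rfl hinner]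
  -- group by cardinality
  rw [Finset.sum_powerset]
  have hcu : (Finset.univ : Finset (Fin N)).card = N := by simp
  rw [hcu]
  apply Finset.sum_congr rfl
  intro m hm
  have hconst : ∀ T ∈ Finset.powersetCard m (Finset.univ : Finset (Fin N)),
      (if N ≤ 2 * T.card then p ^ T.card * (1 - p) ^ (N - T.card) else 0)
      = if N ≤ 2 * m then p ^ m * (1 - p) ^ (N - m) else 0 := by
    intro T hT
    rw [(Finset.mem_powersetCard.1 hT).2]
  rw [Finset.sum_congr rfl hconst, Finset.sum_const, Finset.card_powersetCard, hcu,
    nsmul_eq_mul]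
  have hiff : (N ≤ 2 * m) ↔ ((N : ℝ) / 2 ≤ m) := by
    rw [div_le_iff₀ (by norm_num : (0:ℝ) < 2)]
    constructor
    · intro h; exact_mod_cast (by omega : N ≤ m * 2)
    · intro h; have : N ≤ m * 2 := by exact_mod_cast h
      omega
  by_cases hc : N ≤ 2 * m
  · rw [if_pos hc, if_pos (hiff.1 hc)]; ring
  · rw [if_neg hc, if_neg (fun h => hc (hiff.2 h))]; ring
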